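/- arXiv:2002.08924 — 2 statements merged into one kernel-verified Lean document; each statement's English description precedes it below -/
import Mathlib

section
/- There are exactly 15 all-conserving ternary nearest-neighbour CA rules, i.e., local rules f: {0,1,2}^3 → {0,1,2} that simultaneously conserve the number of 0's, the number of 1's, and the number of 2's. -/
set_option maxRecDepth 20000
set_option maxHeartbeats 2000000


instance (n : ℕ) : NeZero (n + 3) := ⟨by omega⟩

abbrev Rule3 := Fin 3 → Fin 3 → Fin 3 → Fin 3
abbrev Rule2 := Fin 2 → Fin 2 → Fin 2 → Fin 2

/-- Global map of a ternary nearest-neighbour CA on cyclic configurations. -/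
def glob3 {n : ℕ} (f : Rule3) (x : ZMod n → Fin 3) : ZMod n → Fin 3 :=
  fun i => f (x (i - 1)) (x i) (x (i + 1))

/-- Global map of a binary (elementary) CA on cyclic configurations. -/
def glob2 {n : ℕ} (g : Rule2) (x : ZMod n → Fin 2) : ZMod n → Fin 2 :=
  fun i => g (x (i - 1)) (x i) (x (i + 1))

/-- `f` conserves the additive quantity with weight `Ψ` on all cyclic
configurations of all lengths `L ≥ 3`. -/
def conserves3 (f : Rule3) (Ψ : Fin 3 → ℤ) : Prop :=
  ∀ L : ℕ, ∀ x : ZMod (L + 3) → Fin 3,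
    (∑ i, Ψ (glob3 f x i)) = ∑ i, Ψ (x i)

def Ψ0 : Fin 3 → ℤ := fun x => (1 - (x.val : ℤ)) * (2 - (x.val : ℤ)) / 2
def Ψ1 : Fin 3 → ℤ := fun x => (x.val : ℤ) * (2 - (x.val : ℤ))
def Ψ2 : Fin 3 → ℤ := fun x => (x.val : ℤ) * ((x.val : ℤ) - 1) / 2
def Ψs : Fin 3 → ℤ := fun x => (x.val : ℤ)

/-- `f` conserves the number of 0's, of 1's and of 2's. -/
def allConserving3 (f : Rule3) : Prop :=
  conserves3 f Ψ0 ∧ conserves3 f Ψ1 ∧ conserves3 f Ψ2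

/-- A binary rule is number-conserving. -/
def numConserving2 (g : Rule2) : Prop :=
  ∀ L : ℕ, ∀ x : ZMod (L + 3) → Fin 2,
    (∑ i, (glob2 g x i).val) = ∑ i, (x i).val

/-- The elementary CA rule with Wolfram number `w`. -/
def ecaRule (w : ℕ) : Rule2 :=
  fun a b c => ⟨w / 2 ^ (4 * a.val + 2 * b.val + c.val) % 2, Nat.mod_lt _ (by norm_num)⟩

/-- Wolfram number of a binary rule. -/
def wolfram2 (g : Rule2) : ℕ :=
  ∑ a : Fin 2, ∑ b : Fin 2, ∑ c : Fin 2,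
    (g a b c).val * 2 ^ (4 * a.val + 2 * b.val + c.val)

/-- Embedding of `{0,1}` into `{0,1,2}` as `{0,1}`. -/
def i01 : Fin 2 → Fin 3 := Fin.castLE (by norm_num)
/-- Embedding of `{0,1}` into `{0,1,2}` as `{0,2}`. -/
def i02 : Fin 2 → Fin 3 := fun a => ⟨2 * a.val, by have := a.isLt; omega⟩
/-- Embedding of `{0,1}` into `{0,1,2}` as `{1,2}`. -/
def i12 : Fin 2 → Fin 3 := fun a => ⟨a.val + 1, by have := a.isLt; omega⟩

/-- The binary projection `f|_{01}` of `f` exists and equals the binary rule `h`. -/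
def agrees01 (f : Rule3) (h : Rule2) : Prop :=
  ∀ a b c : Fin 2, f (i01 a) (i01 b) (i01 c) = i01 (h a b c)

/-- The binary projection `f|_{02}` of `f` exists and equals the binary rule `h`. -/
def agrees02 (f : Rule3) (h : Rule2) : Prop :=
  ∀ a b c : Fin 2, f (i02 a) (i02 b) (i02 c) = i02 (h a b c)

/-- The binary projection `f|_{12}` of `f` exists and equals the binary rule `h`. -/
def agrees12 (f : Rule3) (h : Rule2) : Prop :=
  ∀ a b c : Fin 2, f (i12 a) (i12 b) (i12 c) = i12 (h a b c)

/-- `f` is reducible to two states: all three binary projections exist. -/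
def reducible3 (f : Rule3) : Prop :=
  (∃ h, agrees01 f h) ∧ (∃ h, agrees02 f h) ∧ (∃ h, agrees12 f h)

/-- Number of occurrences of symbol `k` in the cyclic configuration `x`. -/
def count3 {n : ℕ} [NeZero n] (x : ZMod n → Fin 3) (k : Fin 3) : ℕ :=
  (Finset.univ.filter fun i => x i = k).card

-- ### auxiliary machinery

def ind3 (k x : Fin 3) : ℤ := if x = k then 1 else 0

def FluxN (f : Rule3) : Prop := ∀ k a b c : Fin 3,
  ind3 k (f a b c) + ind3 k (f b c 0) + ind3 k (f c 0 0)
    = ind3 k (f a b 0) + ind3 k (f b 0 0) + ind3 k c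

instance : DecidablePred FluxN := fun f => by unfold FluxN; infer_instance

def R3 (r : Fin 3 → Fin 3 → Fin 3) : Rule3 := fun a b c =>
  if 1 + ind3 1 (r b c) + ind3 1 (r c 0) = ind3 1 (r a b) + ind3 1 (r b 0) + ind3 1 c then 1
  else if 1 + ind3 2 (r b c) + ind3 2 (r c 0) = ind3 2 (r a b) + ind3 2 (r b 0) + ind3 2 c then 2
  else 0

def mk9 (v0 v1 v2 v3 v4 v5 v6 v7 v8 : Fin 3) : Fin 3 → Fin 3 → Fin 3 :=
  fun a b => ![v0,v1,v2,v3,v4,v5,v6,v7,v8] ⟨3*a.val+b.val, by omega⟩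

def ofTable (t : Fin 27 → Fin 3) : Rule3 := fun a b c => t ⟨9*a.val+3*b.val+c.val, by omega⟩

def ruleList : List Rule3 := [
 ofTable ![0,0,0,0,0,0,0,0,0,1,1,1,1,1,1,1,1,1,2,2,2,2,2,2,2,2,2],
 ofTable ![0,0,0,0,1,1,0,2,2,1,1,1,0,1,1,0,2,2,2,2,2,0,1,1,0,2,2],
 ofTable ![0,0,0,0,1,1,2,2,2,1,1,1,0,1,1,2,2,2,0,0,0,0,1,1,2,2,2],
 ofTable ![0,0,0,0,1,2,2,2,2,1,1,1,0,1,2,1,1,1,0,0,0,0,1,2,2,2,2],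
 ofTable ![0,0,0,1,1,1,0,1,2,0,0,0,1,1,1,0,1,2,2,2,2,2,2,2,0,1,2],
 ofTable ![0,0,0,1,1,1,0,2,2,0,0,0,1,1,1,0,2,2,2,2,2,1,1,1,0,2,2],
 ofTable ![0,0,0,1,1,1,2,1,2,0,0,0,1,1,1,2,1,2,0,0,0,2,2,2,2,1,2],
 ofTable ![0,0,0,1,1,1,2,2,2,0,0,0,1,1,1,2,2,2,0,0,0,1,1,1,2,2,2],
 ofTable ![0,0,0,1,1,2,2,2,2,0,0,0,1,1,2,1,1,1,0,0,0,1,1,2,2,2,2],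
 ofTable ![0,0,2,1,1,1,0,0,0,0,0,2,1,1,1,2,2,2,0,0,2,1,1,1,2,2,2],
 ofTable ![0,0,2,1,1,2,0,0,0,0,0,2,1,1,2,1,1,1,0,0,2,1,1,2,2,2,2],
 ofTable ![0,1,0,0,0,0,2,1,2,0,1,0,1,1,1,2,1,2,0,1,0,2,2,2,2,1,2],
 ofTable ![0,1,0,0,0,0,2,2,2,0,1,0,1,1,1,2,2,2,0,1,0,1,1,1,2,2,2],
 ofTable ![0,1,2,0,0,0,0,0,0,0,1,2,1,1,1,2,2,2,0,1,2,1,1,1,2,2,2],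
 ofTable ![0,1,2,0,1,2,0,1,2,0,1,2,0,1,2,0,1,2,0,1,2,0,1,2,0,1,2]]

-- ### sums over small cyclic groups

lemma sum_zmod5 (F : ZMod 5 → ℤ) : (∑ i, F i) = F 0 + F 1 + F 2 + F 3 + F 4 := by
  rw [show (Finset.univ : Finset (ZMod 5)) = {0,1,2,3,4} from by decide]
  rw [Finset.sum_insert (by decide), Finset.sum_insert (by decide),
      Finset.sum_insert (by decide), Finset.sum_insert (by decide), Finset.sum_singleton]
  ring

lemma sum_zmod6 (F : ZMod 6 → ℤ) : (∑ i, F i) = F 0 + F 1 + F 2 + F 3 + F 4 + F 5 := by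
  rw [show (Finset.univ : Finset (ZMod 6)) = {0,1,2,3,4,5} from by decide]
  rw [Finset.sum_insert (by decide), Finset.sum_insert (by decide),
      Finset.sum_insert (by decide), Finset.sum_insert (by decide),
      Finset.sum_insert (by decide), Finset.sum_singleton]
  ring

def cfg5 (a b : Fin 3) : ZMod 5 → Fin 3 := ![a, b, 0, 0, 0]
def cfg6 (a b c : Fin 3) : ZMod 6 → Fin 3 := ![a, b, c, 0, 0, 0]

-- ### necessity: extract finite window identities

lemma extract5 (f : Rule3) (Ψ : Fin 3 → ℤ) (h : conserves3 f Ψ) (a b : Fin 3) :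
    Ψ (f 0 a b) + Ψ (f a b 0) + Ψ (f b 0 0) + Ψ (f 0 0 0) + Ψ (f 0 0 a)
      = Ψ a + Ψ b + 3 * Ψ 0 := by
  have h5 := h 2 (cfg5 a b)
  rw [sum_zmod5, sum_zmod5] at h5
  have e0 : glob3 f (cfg5 a b) 0 = f 0 a b := rfl
  have e1 : glob3 f (cfg5 a b) 1 = f a b 0 := rfl
  have e2 : glob3 f (cfg5 a b) 2 = f b 0 0 := rfl
  have e3 : glob3 f (cfg5 a b) 3 = f 0 0 0 := rfl
  have e4 : glob3 f (cfg5 a b) 4 = f 0 0 a := rfl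
  have x0 : cfg5 a b 0 = a := rfl
  have x1 : cfg5 a b 1 = b := rfl
  have x2 : cfg5 a b 2 = 0 := rfl
  have x3 : cfg5 a b 3 = 0 := rfl
  have x4 : cfg5 a b 4 = 0 := rfl
  rw [e0, e1, e2, e3, e4, x0, x1, x2, x3, x4] at h5
  linarith

lemma extract6 (f : Rule3) (Ψ : Fin 3 → ℤ) (h : conserves3 f Ψ) (a b c : Fin 3) :
    Ψ (f 0 a b) + Ψ (f a b c) + Ψ (f b c 0) + Ψ (f c 0 0) + Ψ (f 0 0 0) + Ψ (f 0 0 a)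
      = Ψ a + Ψ b + Ψ c + 3 * Ψ 0 := by
  have h6 := h 3 (cfg6 a b c)
  rw [sum_zmod6, sum_zmod6] at h6
  have e0 : glob3 f (cfg6 a b c) 0 = f 0 a b := rfl
  have e1 : glob3 f (cfg6 a b c) 1 = f a b c := rfl
  have e2 : glob3 f (cfg6 a b c) 2 = f b c 0 := rfl
  have e3 : glob3 f (cfg6 a b c) 3 = f c 0 0 := rfl
  have e4 : glob3 f (cfg6 a b c) 4 = f 0 0 0 := rfl
  have e5 : glob3 f (cfg6 a b c) 5 = f 0 0 a := rfl
  have x0 : cfg6 a b c 0 = a := rfl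
  have x1 : cfg6 a b c 1 = b := rfl
  have x2 : cfg6 a b c 2 = c := rfl
  have x3 : cfg6 a b c 3 = 0 := rfl
  have x4 : cfg6 a b c 4 = 0 := rfl
  have x5 : cfg6 a b c 5 = 0 := rfl
  rw [e0, e1, e2, e3, e4, e5, x0, x1, x2, x3, x4, x5] at h6
  linarith

lemma psi_eq_ind : (∀ x, Ψ0 x = ind3 0 x) ∧ (∀ x, Ψ1 x = ind3 1 x) ∧ (∀ x, Ψ2 x = ind3 2 x) := by
  refine ⟨?_, ?_, ?_⟩ <;> decide

lemma extract5' (f : Rule3) (h : allConserving3 f) (a b : Fin 3) (k : Fin 3) :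
    ind3 k (f 0 a b) + ind3 k (f a b 0) + ind3 k (f b 0 0) + ind3 k (f 0 0 0) + ind3 k (f 0 0 a)
      = ind3 k a + ind3 k b + 3 * ind3 k 0 := by
  obtain ⟨p0, p1, p2⟩ := psi_eq_ind
  fin_cases k
  · have := extract5 f Ψ0 h.1 a b; simp only [p0] at this; exact this
  · have := extract5 f Ψ1 h.2.1 a b; simp only [p1] at this; exact this
  · have := extract5 f Ψ2 h.2.2 a b; simp only [p2] at this; exact this

lemma extract6' (f : Rule3) (h : allConserving3 f) (a b c : Fin 3) (k : Fin 3) :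
    ind3 k (f 0 a b) + ind3 k (f a b c) + ind3 k (f b c 0) + ind3 k (f c 0 0)
      + ind3 k (f 0 0 0) + ind3 k (f 0 0 a)
      = ind3 k a + ind3 k b + ind3 k c + 3 * ind3 k 0 := by
  obtain ⟨p0, p1, p2⟩ := psi_eq_ind
  fin_cases k
  · have := extract6 f Ψ0 h.1 a b c; simp only [p0] at this; exact this
  · have := extract6 f Ψ1 h.2.1 a b c; simp only [p1] at this; exact this
  · have := extract6 f Ψ2 h.2.2 a b c; simp only [p2] at this; exact this

lemma flux_of_all (f : Rule3) (h : allConserving3 f) : FluxN f := by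
  intro k a b c
  have h5 := extract5' f h a b k
  have h6 := extract6' f h a b c k
  omega

-- ### reconstruction

lemma fin3cases : ∀ v : Fin 3, v = 0 ∨ v = 1 ∨ v = 2 := by decide

lemma flux_fix (f : Rule3) (hf : FluxN f) : f = R3 (fun a b => f a b 0) := by
  funext a b c
  have h1 := hf 1 a b c
  have h2 := hf 2 a b c
  simp only [R3]
  generalize hv : f a b c = v at h1 h2 ⊢
  rcases fin3cases v with rfl | rfl | rfl <;>
    simp only [show (ind3 1 0 : ℤ) = 0 from rfl, show (ind3 2 0 : ℤ) = 0 from rfl,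
      show (ind3 1 1 : ℤ) = 1 from rfl, show (ind3 2 1 : ℤ) = 0 from rfl,
      show (ind3 1 2 : ℤ) = 0 from rfl, show (ind3 2 2 : ℤ) = 1 from rfl] at h1 h2 <;>
    split_ifs with hA hB <;> first | rfl | (exfalso; omega)

lemma f000 (f : Rule3) (hf : FluxN f) : f 0 0 0 = 0 := by
  have H : ∀ k : Fin 3, ind3 k (f 0 0 0) + ind3 k (f 0 0 0) + ind3 k (f 0 0 0)
      = ind3 k (f 0 0 0) + ind3 k (f 0 0 0) + ind3 k 0 := fun k => hf k 0 0 0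
  revert H
  generalize f 0 0 0 = v
  revert v; decide

lemma mem3 (w1 w2 w3 w4 a b : Fin 3)
    (H : ∀ k, ind3 k w1 + ind3 k w2 + ind3 k w3 + ind3 k 0 + ind3 k w4
      = ind3 k a + ind3 k b + 3 * ind3 k 0) :
    w2 = 0 ∨ w2 = a ∨ w2 = b := by
  revert H; revert w1 w2 w3 w4 a b; decide

lemma range_entry (f : Rule3) (h : allConserving3 f) (hf : FluxN f) (a b : Fin 3) :
    f a b 0 = 0 ∨ f a b 0 = a ∨ f a b 0 = b := by
  apply mem3 (f 0 a b) (f a b 0) (f b 0 0) (f 0 0 a) a b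
  intro k
  have := extract5' f h a b k
  rw [f000 f hf] at this
  omega

def okv (v1 v2 v3 v4 v5 v6 v7 v8 : Fin 3) : Bool :=
  !(decide (v1 = 0 ∨ v1 = 0 ∨ v1 = 1)) || !(decide (v2 = 0 ∨ v2 = 0 ∨ v2 = 2)) ||
  !(decide (v3 = 0 ∨ v3 = 1 ∨ v3 = 0)) || !(decide (v4 = 0 ∨ v4 = 1 ∨ v4 = 1)) ||
  !(decide (v6 = 0 ∨ v6 = 2 ∨ v6 = 0)) || !(decide (v8 = 0 ∨ v8 = 2 ∨ v8 = 2)) ||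
  !(decide (FluxN (R3 (mk9 0 v1 v2 v3 v4 v5 v6 v7 v8)))) ||
  decide (R3 (mk9 0 v1 v2 v3 v4 v5 v6 v7 v8) ∈ ruleList)

theorem bigstepB : ∀ v1 v2 v3 v4 v5 v6 v7 v8 : Fin 3, okv v1 v2 v3 v4 v5 v6 v7 v8 = true := by
  decide

theorem bigstep : ∀ v1 v2 v3 v4 v5 v6 v7 v8 : Fin 3,
    (v1 = 0 ∨ v1 = 0 ∨ v1 = 1) → (v2 = 0 ∨ v2 = 0 ∨ v2 = 2) →
    (v3 = 0 ∨ v3 = 1 ∨ v3 = 0) → (v4 = 0 ∨ v4 = 1 ∨ v4 = 1) →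
    (v6 = 0 ∨ v6 = 2 ∨ v6 = 0) → (v8 = 0 ∨ v8 = 2 ∨ v8 = 2) →
    FluxN (R3 (mk9 0 v1 v2 v3 v4 v5 v6 v7 v8)) →
    R3 (mk9 0 v1 v2 v3 v4 v5 v6 v7 v8) ∈ ruleList := by
  intro v1 v2 v3 v4 v5 v6 v7 v8 h1 h2 h3 h4 h6 h8 hf
  have h := bigstepB v1 v2 v3 v4 v5 v6 v7 v8
  unfold okv at h
  simp only [Bool.or_eq_true] at h
  rcases h with (((((((h|h)|h)|h)|h)|h)|h)|h)
  exacts [absurd h1 (of_decide_eq_false (by rwa [Bool.not_eq_true'] at h)),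
    absurd h2 (of_decide_eq_false (by rwa [Bool.not_eq_true'] at h)),
    absurd h3 (of_decide_eq_false (by rwa [Bool.not_eq_true'] at h)),
    absurd h4 (of_decide_eq_false (by rwa [Bool.not_eq_true'] at h)),
    absurd h6 (of_decide_eq_false (by rwa [Bool.not_eq_true'] at h)),
    absurd h8 (of_decide_eq_false (by rwa [Bool.not_eq_true'] at h)),
    absurd hf (of_decide_eq_false (by rwa [Bool.not_eq_true'] at h)),
    of_decide_eq_true h]

theorem rlfB : ruleList.all (fun f => decide (FluxN f)) = true := by decide

theorem ruleList_flux : ∀ f ∈ ruleList, FluxN f := by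
  intro f hf
  exact of_decide_eq_true (List.all_eq_true.mp rlfB f hf)

def enc (f : Rule3) : List (Fin 3) :=
  (List.finRange 3).flatMap fun a => (List.finRange 3).flatMap fun b => (List.finRange 3).map (f a b)

lemma ruleList_nodup : ruleList.Nodup := by
  have h : (ruleList.map enc).Nodup := by decide
  exact h.of_map

-- ### sufficiency: telescoping

lemma conserves_of_flux (f : Rule3) (Ψ : Fin 3 → ℤ) (G : Fin 3 → Fin 3 → ℤ)
    (h : ∀ a b c, Ψ (f a b c) = Ψ b + G a b - G b c) : conserves3 f Ψ := by
  intro L x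
  have key : (∑ i, G (x i) (x (i + 1))) = ∑ i, G (x (i - 1)) (x i) :=
    Fintype.sum_equiv (Equiv.addRight (1 : ZMod (L + 3)))
      (fun i => G (x i) (x (i + 1))) (fun j => G (x (j - 1)) (x j))
      (fun i => by simp [Equiv.coe_addRight, add_sub_cancel_right])
  calc (∑ i, Ψ (glob3 f x i))
      = ∑ i, (Ψ (x i) + G (x (i - 1)) (x i) - G (x i) (x (i + 1))) := by
        apply Finset.sum_congr rfl; intro i _; exact h _ _ _
    _ = (∑ i, Ψ (x i)) + (∑ i, G (x (i - 1)) (x i)) - ∑ i, G (x i) (x (i + 1)) := by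
        rw [Finset.sum_sub_distrib, Finset.sum_add_distrib]
    _ = ∑ i, Ψ (x i) := by rw [key]; ring

lemma all_of_flux (f : Rule3) (hf : FluxN f) : allConserving3 f := by
  obtain ⟨p0, p1, p2⟩ := psi_eq_ind
  have main : ∀ k : Fin 3, ∀ a b c, ind3 k (f a b c) = ind3 k b +
      (ind3 k (f a b 0) + ind3 k (f b 0 0) - ind3 k b) -
      (ind3 k (f b c 0) + ind3 k (f c 0 0) - ind3 k c) := by
    intro k a b c; have := hf k a b c; omega
  refine ⟨?_, ?_, ?_⟩
  · exact conserves_of_flux f Ψ0 _ (fun a b c => by rw [p0, p0]; exact main 0 a b c)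
  · exact conserves_of_flux f Ψ1 _ (fun a b c => by rw [p1, p1]; exact main 1 a b c)
  · exact conserves_of_flux f Ψ2 _ (fun a b c => by rw [p2, p2]; exact main 2 a b c)

-- ### the characterization and count

lemma characterization (f : Rule3) : allConserving3 f ↔ f ∈ ruleList := by
  constructor
  · intro h
    have hf : FluxN f := flux_of_all f h
    have h000 := f000 f hf
    have hrep : f = R3 (mk9 0 (f 0 1 0) (f 0 2 0) (f 1 0 0) (f 1 1 0) (f 1 2 0)
        (f 2 0 0) (f 2 1 0) (f 2 2 0)) := by
      have hr : (fun a b => f a b 0) = mk9 0 (f 0 1 0) (f 0 2 0) (f 1 0 0) (f 1 1 0)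
          (f 1 2 0) (f 2 0 0) (f 2 1 0) (f 2 2 0) := by
        funext a b
        fin_cases a <;> fin_cases b <;> first | exact h000 | rfl
      rw [← hr]; exact flux_fix f hf
    rw [hrep]
    exact bigstep _ _ _ _ _ _ _ _
      (range_entry f h hf 0 1) (range_entry f h hf 0 2) (range_entry f h hf 1 0)
      (range_entry f h hf 1 1) (range_entry f h hf 2 0) (range_entry f h hf 2 2)
      (hrep ▸ hf)
  · intro h
    exact all_of_flux f (ruleList_flux f h)

/-- There are exactly 15 all-conserving ternary nearest-neighbour rules. -/
theorem count_all_conserving :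
    Nat.card {f : Rule3 // allConserving3 f} = 15 := by
  have e : {f : Rule3 // allConserving3 f} ≃ {f : Rule3 // f ∈ ruleList.toFinset} :=
    Equiv.subtypeEquivRight (fun f => by
      rw [List.mem_toFinset]; exact characterization f)
  rw [Nat.card_congr e, Nat.card_eq_finsetCard, List.toFinset_card_of_nodup ruleList_nodup]
  rfl
end

section
/- There exists no pair of ternary nearest-neighbour rules (f, g) solving the simple-majority ternary density classification problem such that f is all-conserving and g is reducible to two states. In particular, any all-conserving f satisfies: each of its three binary projections f|_{01}, f|_{02}, f|_{12} is one of the elementary rules 170, 184, 204, 226, 240, and no all-conserving rule has all three projections lying in {184, 226}. -/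
/-- The pair `(f, g)` solves the simple-majority ternary density classification
problem: whenever symbol `k` forms a strict majority, iterating `f` then `g`
(suitable numbers of times depending on the length) yields the constant
configuration `k`. -/
def solvesSimpleMajority (f g : Rule3) : Prop :=
  ∃ m n : ℕ → ℕ, ∀ L : ℕ, ∀ x : ZMod (L + 3) → Fin 3, ∀ k : Fin 3,
    (∀ j : Fin 3, j ≠ k → count3 x j < count3 x k) →
    (glob3 g)^[m L] ((glob3 f)^[n L] x) = fun _ => k


/-! ### Auxiliary development -/

section Aux

lemma sum3Z (F : ZMod 3 → ℤ) : ∑ i, F i = F 0 + F 1 + F 2 := by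
  exact Fin.sum_univ_three F

lemma sum4Z (F : ZMod 4 → ℤ) : ∑ i, F i = F 0 + F 1 + F 2 + F 3 := by
  exact Fin.sum_univ_four F

/-- Length-3 local conservation equations. -/
lemma c3_of (f : Rule3) (ψ : Fin 3 → ℤ) (h : conserves3 f ψ) (a b c : Fin 3) :
    ψ (f c a b) + ψ (f a b c) + ψ (f b c a) = ψ a + ψ b + ψ c := by
  have key := h 0 (fun i : ZMod 3 => if i = 0 then a else if i = 1 then b else c)
  rw [sum3Z, sum3Z] at key
  have e1 : (0 : ZMod 3) - 1 = 2 := by decide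
  have e2 : (0 : ZMod 3) + 1 = 1 := by decide
  have e3 : (1 : ZMod 3) - 1 = 0 := by decide
  have e4 : (1 : ZMod 3) + 1 = 2 := by decide
  have e5 : (2 : ZMod 3) - 1 = 1 := by decide
  have e6 : (2 : ZMod 3) + 1 = 0 := by decide
  simp only [glob3, e1, e2, e3, e4, e5, e6] at key
  norm_num at key
  convert key using 2 <;> simp [show (1 : ZMod 3) ≠ 0 by decide, show (2 : ZMod 3) ≠ 0 by decide, show (2 : ZMod 3) ≠ 1 by decide]

/-- Length-4 local conservation equations. -/
lemma c4_of (f : Rule3) (ψ : Fin 3 → ℤ) (h : conserves3 f ψ) (a b c d : Fin 3) :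
    ψ (f d a b) + ψ (f a b c) + ψ (f b c d) + ψ (f c d a) = ψ a + ψ b + ψ c + ψ d := by
  have key := h 1 (fun i : ZMod 4 => if i = 0 then a else if i = 1 then b else if i = 2 then c else d)
  rw [sum4Z, sum4Z] at key
  have e1 : (0 : ZMod 4) - 1 = 3 := by decide
  have e2 : (0 : ZMod 4) + 1 = 1 := by decide
  have e3 : (1 : ZMod 4) - 1 = 0 := by decide
  have e4 : (1 : ZMod 4) + 1 = 2 := by decide
  have e5 : (2 : ZMod 4) - 1 = 1 := by decide
  have e6 : (2 : ZMod 4) + 1 = 3 := by decide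
  have e7 : (3 : ZMod 4) - 1 = 2 := by decide
  have e8 : (3 : ZMod 4) + 1 = 0 := by decide
  simp only [glob3, e1, e2, e3, e4, e5, e6, e7, e8] at key
  norm_num at key
  convert key using 2 <;> simp [show (1 : ZMod 4) ≠ 0 by decide, show (2 : ZMod 4) ≠ 0 by decide, show (2 : ZMod 4) ≠ 1 by decide, show (3 : ZMod 4) ≠ 0 by decide, show (3 : ZMod 4) ≠ 1 by decide, show (3 : ZMod 4) ≠ 2 by decide]

end Aux

section Proj

def p01 : Fin 3 → Fin 2 := fun v => if v = 1 then 1 else 0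
def p02 : Fin 3 → Fin 2 := fun v => if v = 2 then 1 else 0
def p12 : Fin 3 → Fin 2 := fun v => if v = 2 then 1 else 0

lemma psi_nonneg : (∀ v : Fin 3, 0 ≤ Ψ0 v) ∧ (∀ v : Fin 3, 0 ≤ Ψ1 v) ∧ (∀ v : Fin 3, 0 ≤ Ψ2 v) := by decide

/-- if the three ψ-values vanish, so does ψ of the middle image -/
lemma no_new_symbol (f : Rule3) (ψ : Fin 3 → ℤ) (hcons : conserves3 f ψ)
    (hnn : ∀ v : Fin 3, 0 ≤ ψ v) (a b c : Fin 3)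
    (ha : ψ a = 0) (hb : ψ b = 0) (hc : ψ c = 0) : ψ (f a b c) = 0 := by
  have h := c3_of f ψ hcons a b c
  rw [ha, hb, hc] at h
  have h1 := hnn (f c a b); have h2 := hnn (f a b c); have h3 := hnn (f b c a)
  omega

lemma agrees01_proj (f : Rule3) (hc : allConserving3 f) :
    agrees01 f (fun a b c => p01 (f (i01 a) (i01 b) (i01 c))) := by
  intro a b c
  have h := no_new_symbol f Ψ2 hc.2.2 psi_nonneg.2.2 (i01 a) (i01 b) (i01 c)
    (by fin_cases a <;> decide) (by fin_cases b <;> decide) (by fin_cases c <;> decide)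
  show f (i01 a) (i01 b) (i01 c) = i01 (p01 (f (i01 a) (i01 b) (i01 c)))
  revert h; generalize f (i01 a) (i01 b) (i01 c) = v
  revert v; decide

lemma agrees02_proj (f : Rule3) (hc : allConserving3 f) :
    agrees02 f (fun a b c => p02 (f (i02 a) (i02 b) (i02 c))) := by
  intro a b c
  have h := no_new_symbol f Ψ1 hc.2.1 psi_nonneg.2.1 (i02 a) (i02 b) (i02 c)
    (by fin_cases a <;> decide) (by fin_cases b <;> decide) (by fin_cases c <;> decide)
  show f (i02 a) (i02 b) (i02 c) = i02 (p02 (f (i02 a) (i02 b) (i02 c)))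
  revert h; generalize f (i02 a) (i02 b) (i02 c) = v
  revert v; decide

lemma agrees12_proj (f : Rule3) (hc : allConserving3 f) :
    agrees12 f (fun a b c => p12 (f (i12 a) (i12 b) (i12 c))) := by
  intro a b c
  have h := no_new_symbol f Ψ0 hc.1 psi_nonneg.1 (i12 a) (i12 b) (i12 c)
    (by fin_cases a <;> decide) (by fin_cases b <;> decide) (by fin_cases c <;> decide)
  show f (i12 a) (i12 b) (i12 c) = i12 (p12 (f (i12 a) (i12 b) (i12 c)))
  revert h; generalize f (i12 a) (i12 b) (i12 c) = v
  revert v; decide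

end Proj

section BinaryNC

abbrev E3 (h : Rule2) : Prop := ∀ a b c : Fin 2,
  (h c a b).val + (h a b c).val + (h b c a).val = a.val + b.val + c.val
abbrev E4 (h : Rule2) : Prop := ∀ a b c d : Fin 2,
  (h d a b).val + (h a b c).val + (h b c d).val + (h c d a).val = a.val + b.val + c.val + d.val

set_option maxRecDepth 10000 in
lemma ncClass : ∀ h : Rule2, E3 h → E4 h →
    (wolfram2 h = 170 ∨ wolfram2 h = 184 ∨ wolfram2 h = 204 ∨ wolfram2 h = 226 ∨ wolfram2 h = 240) := by
  decide

set_option maxRecDepth 10000 in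
lemma eca_wolfram : ∀ h : Rule2, ecaRule (wolfram2 h) = h := by decide

set_option maxRecDepth 10000 in
lemma wolfram_lt : ∀ h : Rule2, wolfram2 h < 256 := by decide

/-- derive E3 and E4 for a projection -/
lemma E34_of_proj (f : Rule3) (h : Rule2) (e : Fin 2 → Fin 3) (ψ : Fin 3 → ℤ)
    (hψ3 : conserves3 f ψ)
    (hev : ∀ v : Fin 2, ψ (e v) = (v.val : ℤ))
    (hag : ∀ a b c : Fin 2, f (e a) (e b) (e c) = e (h a b c)) :
    E3 h ∧ E4 h := by
  constructor
  · intro a b c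
    have k := c3_of f ψ hψ3 (e a) (e b) (e c)
    rw [hag, hag, hag, hev, hev, hev, hev, hev, hev] at k
    exact_mod_cast k
  · intro a b c d
    have k := c4_of f ψ hψ3 (e a) (e b) (e c) (e d)
    rw [hag, hag, hag, hag] at k
    simp only [hev] at k
    exact_mod_cast k

lemma psi_emb : (∀ v : Fin 2, Ψ1 (i01 v) = (v.val : ℤ)) ∧
    (∀ v : Fin 2, Ψ2 (i02 v) = (v.val : ℤ)) ∧ (∀ v : Fin 2, Ψ2 (i12 v) = (v.val : ℤ)) := by decide

/-- Part B of the theorem. -/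
lemma partB (f : Rule3) (hc : allConserving3 f) :
    (∃ h, agrees01 f h ∧ wolfram2 h ∈ ({170, 184, 204, 226, 240} : Set ℕ)) ∧
    (∃ h, agrees02 f h ∧ wolfram2 h ∈ ({170, 184, 204, 226, 240} : Set ℕ)) ∧
    (∃ h, agrees12 f h ∧ wolfram2 h ∈ ({170, 184, 204, 226, 240} : Set ℕ)) := by
  refine ⟨⟨_, agrees01_proj f hc, ?_⟩, ⟨_, agrees02_proj f hc, ?_⟩, ⟨_, agrees12_proj f hc, ?_⟩⟩
  · have := E34_of_proj f _ i01 Ψ1 hc.2.1 psi_emb.1 (agrees01_proj f hc)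
    have := ncClass _ this.1 this.2
    simpa [Set.mem_insert_iff] using this
  · have := E34_of_proj f _ i02 Ψ2 hc.2.2 psi_emb.2.1 (agrees02_proj f hc)
    have := ncClass _ this.1 this.2
    simpa [Set.mem_insert_iff] using this
  · have := E34_of_proj f _ i12 Ψ2 hc.2.2 psi_emb.2.2 (agrees12_proj f hc)
    have := ncClass _ this.1 this.2
    simpa [Set.mem_insert_iff] using this

end BinaryNC

section PartC

def rb (b : Bool) : Rule2 := if b then ecaRule 184 else ecaRule 226

set_option maxRecDepth 10000 in
lemma w_to_rb : ∀ h : Rule2, (wolfram2 h = 184 ∨ wolfram2 h = 226) → ∃ b, h = rb b := by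
  intro h hw
  rcases hw with hw | hw
  · exact ⟨true, by rw [show rb true = ecaRule 184 from rfl, ← hw, eca_wolfram]⟩
  · exact ⟨false, by rw [show rb false = ecaRule 226 from rfl, ← hw, eca_wolfram]⟩

set_option maxRecDepth 100000 in
set_option maxHeartbeats 1000000 in
lemma key3' : ∀ (b1 b2 b3 : Bool) (v0 v1 v2 v3 v4 v5 : Fin 3),
    ¬ (Ψ0 (i02 (rb b2 1 0 0)) + Ψ0 (i01 (rb b1 0 0 1)) + Ψ0 v0 + Ψ0 v3 = 2 ∧
       Ψ0 (i01 (rb b1 1 0 0)) + Ψ0 (i02 (rb b2 0 0 1)) + Ψ0 v1 + Ψ0 v5 = 2 ∧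
       Ψ1 v4 + Ψ1 (i01 (rb b1 0 1 1)) + Ψ1 (i12 (rb b3 0 0 1)) + Ψ1 v3 = 2 ∧
       Ψ1 v2 + Ψ1 v1 + Ψ1 (i12 (rb b3 1 0 0)) + Ψ1 (i01 (rb b1 1 1 0)) = 2 ∧
       Ψ2 v4 + Ψ2 v0 + Ψ2 (i12 (rb b3 0 1 1)) + Ψ2 (i02 (rb b2 1 1 0)) = 2 ∧
       Ψ2 v2 + Ψ2 (i02 (rb b2 0 1 1)) + Ψ2 (i12 (rb b3 1 1 0)) + Ψ2 v5 = 2) := by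
  decide

/-- Part C of the theorem. -/
lemma partC : ¬ ∃ f : Rule3, allConserving3 f ∧
    (∃ h, agrees01 f h ∧ (wolfram2 h = 184 ∨ wolfram2 h = 226)) ∧
    (∃ h, agrees02 f h ∧ (wolfram2 h = 184 ∨ wolfram2 h = 226)) ∧
    (∃ h, agrees12 f h ∧ (wolfram2 h = 184 ∨ wolfram2 h = 226)) := by
  rintro ⟨f, hc, ⟨h1, hag1, hw1⟩, ⟨h2, hag2, hw2⟩, ⟨h3, hag3, hw3⟩⟩
  obtain ⟨b1, rfl⟩ := w_to_rb h1 hw1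
  obtain ⟨b2, rfl⟩ := w_to_rb h2 hw2
  obtain ⟨b3, rfl⟩ := w_to_rb h3 hw3
  refine key3' b1 b2 b3 (f 0 1 2) (f 0 2 1) (f 1 0 2) (f 1 2 0) (f 2 0 1) (f 2 1 0)
    ⟨?_, ?_, ?_, ?_, ?_, ?_⟩
  · rw [← hag2 1 0 0, ← hag1 0 0 1]
    exact (c4_of f Ψ0 hc.1 0 0 1 2).trans (by decide)
  · rw [← hag1 1 0 0, ← hag2 0 0 1]
    exact (c4_of f Ψ0 hc.1 0 0 2 1).trans (by decide)
  · rw [← hag1 0 1 1, ← hag3 0 0 1]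
    exact (c4_of f Ψ1 hc.2.1 0 1 1 2).trans (by decide)
  · rw [← hag3 1 0 0, ← hag1 1 1 0]
    exact (c4_of f Ψ1 hc.2.1 0 2 1 1).trans (by decide)
  · rw [← hag3 0 1 1, ← hag2 1 1 0]
    exact (c4_of f Ψ2 hc.2.2 0 1 2 2).trans (by decide)
  · rw [← hag2 0 1 1, ← hag3 1 1 0]
    exact (c4_of f Ψ2 hc.2.2 0 2 2 1).trans (by decide)

end PartC

section Witness

def dec (n : ℕ) (m : ℕ) : ZMod (n + 3) → Fin 2 :=
  fun i => if Nat.testBit m (ZMod.val i) then 1 else 0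

abbrev checkW (h : Rule2) (L : ℕ) (k : Fin 2) (x0 : ℕ) (S : List ℕ) : Prop :=
  x0 ∈ S ∧
  (∀ m ∈ S, (∃ m' ∈ S, glob2 h (dec L m) = dec L m') ∧ dec L m ≠ fun _ => k) ∧
  ((Finset.univ.filter fun i => dec L x0 i ≠ k).card <
    (Finset.univ.filter fun i => dec L x0 i = k).card)

def witData : List (ℕ × ℕ × ℕ × List ℕ) := [
  (0, 1, 3, [3, 0]),
  (1, 0, 1, [1, 4]),
  (0, 1, 3, [3, 0]),
  (0, 0, 1, [1, 4, 2]),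
  (0, 0, 1, [1]),
  (0, 0, 1, [1]),
  (0, 1, 3, [3, 0]),
  (2, 0, 3, [3, 24, 6, 17, 12]),
  (0, 1, 3, [3, 1, 0]),
  (1, 0, 1, [1, 4]),
  (0, 0, 1, [1, 4, 2]),
  (0, 0, 1, [1, 4, 2]),
  (0, 0, 1, [1]),
  (0, 0, 1, [1]),
  (1, 0, 1, [1, 9, 12, 6, 3]),
  (1, 0, 1, [1, 13, 4, 7]),
  (0, 1, 3, [3, 0]),
  (0, 0, 1, [1, 2, 4]),
  (0, 1, 3, [3, 0]),
  (2, 0, 3, [3, 28]),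
  (0, 1, 3, [3, 0]),
  (2, 0, 3, [3, 12, 17, 6, 24]),
  (0, 1, 3, [3, 0]),
  (2, 0, 3, [3, 28]),
  (0, 0, 1, [1, 2, 4]),
  (0, 0, 1, [1, 2, 4]),
  (1, 1, 7, [7, 1, 10, 0]),
  (2, 1, 7, [7, 25, 14, 19, 28]),
  (0, 0, 1, [1, 3]),
  (0, 0, 1, [1, 3]),
  (4, 0, 1, [1, 67, 100, 63]),
  (2, 1, 7, [7, 25, 14, 19, 28]),
  (0, 1, 3, [3, 4, 0]),
  (1, 0, 1, [1, 4]),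
  (0, 0, 1, [1, 4, 2]),
  (0, 0, 1, [1, 4, 2]),
  (0, 0, 1, [1]),
  (0, 0, 1, [1]),
  (1, 0, 1, [1, 9, 4, 6]),
  (2, 0, 3, [3, 24, 6, 17, 12]),
  (0, 1, 3, [3, 5, 6]),
  (0, 1, 3, [3, 5, 6]),
  (0, 0, 1, [1, 4, 2]),
  (0, 0, 1, [1, 4, 2]),
  (0, 0, 1, [1]),
  (0, 0, 1, [1]),
  (0, 1, 3, [3, 5, 6]),
  (0, 1, 3, [3, 5, 6]),
  (0, 0, 1, [1, 2, 4]),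
  (0, 0, 1, [1, 2, 4]),
  (0, 0, 1, [1, 6]),
  (0, 0, 1, [1, 6]),
  (1, 0, 1, [1, 3, 4, 12]),
  (2, 0, 3, [3, 12, 17, 6, 24]),
  (1, 0, 1, [1, 11, 4, 14]),
  (2, 0, 3, [3, 28]),
  (0, 0, 1, [1, 2, 4]),
  (0, 0, 1, [1, 2, 4]),
  (0, 1, 3, [3, 5, 6]),
  (0, 1, 3, [3, 5, 6]),
  (0, 1, 3, [3, 5, 6]),
  (0, 1, 3, [3, 5, 6]),
  (0, 1, 3, [3, 5, 6]),
  (0, 1, 3, [3, 5, 6]),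
  (0, 1, 3, [3, 2, 0]),
  (1, 0, 1, [1, 4]),
  (0, 0, 1, [1, 4, 2]),
  (0, 0, 1, [1, 4, 2]),
  (0, 0, 1, [1]),
  (0, 0, 1, [1]),
  (0, 0, 1, [1, 5]),
  (0, 0, 1, [1, 5]),
  (0, 1, 3, [3]),
  (0, 1, 3, [3]),
  (0, 1, 3, [3]),
  (0, 1, 3, [3]),
  (0, 0, 1, [1]),
  (0, 0, 1, [1]),
  (0, 1, 3, [3]),
  (0, 1, 3, [3]),
  (0, 0, 1, [1, 2, 4]),
  (0, 0, 1, [1, 2, 4]),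
  (1, 1, 7, [7, 4, 10, 0]),
  (2, 1, 7, [7, 28, 19, 14, 25]),
  (1, 0, 1, [1, 3, 6, 12, 9]),
  (1, 0, 1, [1, 7, 4, 13]),
  (4, 0, 1, [1, 67, 38, 125]),
  (2, 1, 7, [7, 28, 19, 14, 25]),
  (0, 1, 3, [3]),
  (0, 1, 3, [3]),
  (0, 1, 3, [3]),
  (0, 1, 3, [3]),
  (0, 1, 3, [3]),
  (0, 1, 3, [3]),
  (0, 1, 3, [3]),
  (0, 1, 3, [3]),
  (0, 1, 3, [3, 6, 5]),
  (0, 1, 3, [3, 6, 5]),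
  (0, 0, 1, [1, 4, 2]),
  (0, 0, 1, [1, 4, 2]),
  (0, 0, 1, [1]),
  (0, 0, 1, [1]),
  (0, 1, 3, [3, 6, 5]),
  (0, 1, 3, [3, 6, 5]),
  (1, 1, 7, [7, 13]),
  (1, 0, 1, [1, 4]),
  (0, 0, 1, [1, 4, 2]),
  (0, 0, 1, [1, 4, 2]),
  (0, 0, 1, [1]),
  (0, 0, 1, [1]),
  (1, 1, 7, [7, 13]),
  (1, 1, 7, [7, 13]),
  (0, 0, 1, [1, 2, 4]),
  (0, 0, 1, [1, 2, 4]),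
  (0, 1, 3, [3, 6, 5]),
  (0, 1, 3, [3, 6, 5]),
  (0, 1, 3, [3, 6, 5]),
  (0, 1, 3, [3, 6, 5]),
  (0, 1, 3, [3, 6, 5]),
  (0, 1, 3, [3, 6, 5]),
  (0, 0, 1, [1, 2, 4]),
  (0, 0, 1, [1, 2, 4]),
  (1, 1, 7, [7, 13]),
  (1, 1, 7, [7, 13]),
  (1, 1, 7, [7, 13]),
  (1, 1, 7, [7, 13]),
  (1, 1, 7, [7, 13]),
  (1, 1, 7, [7, 13]),
  (0, 1, 3, [3, 0]),
  (1, 0, 1, [1, 4]),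
  (0, 1, 3, [3, 0]),
  (0, 0, 1, [1, 4, 2]),
  (0, 0, 1, [1]),
  (0, 0, 1, [1]),
  (0, 1, 3, [3, 0]),
  (4, 0, 1, [1, 125, 120, 54]),
  (0, 1, 3, [3, 1, 0]),
  (1, 0, 1, [1, 4]),
  (0, 0, 1, [1, 4, 2]),
  (0, 0, 1, [1, 4, 2]),
  (0, 0, 1, [1]),
  (0, 0, 1, [1]),
  (1, 0, 1, [1, 9, 12, 6, 3]),
  (1, 1, 7, [7, 3, 9, 12, 6]),
  (0, 1, 3, [3, 0]),
  (0, 0, 1, [1, 2, 4]),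
  (0, 1, 3, [3, 0]),
  (1, 0, 1, [1, 14, 4, 11]),
  (0, 1, 3, [3, 0]),
  (4, 0, 1, [1, 63, 30, 108]),
  (0, 0, 1, [1, 7]),
  (0, 0, 1, [1, 7]),
  (0, 0, 1, [1, 2, 4]),
  (0, 0, 1, [1, 2, 4]),
  (1, 1, 7, [7, 3, 13, 12]),
  (1, 1, 7, [7, 3, 13, 12]),
  (0, 0, 1, [1, 3]),
  (0, 0, 1, [1, 3]),
  (0, 0, 1, [1, 7]),
  (0, 0, 1, [1, 7]),
  (0, 1, 3, [3, 4, 0]),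
  (1, 0, 1, [1, 4]),
  (0, 0, 1, [1, 4, 2]),
  (0, 0, 1, [1, 4, 2]),
  (0, 0, 1, [1]),
  (0, 0, 1, [1]),
  (1, 0, 1, [1, 9, 4, 6]),
  (1, 0, 1, [1, 13, 10, 15]),
  (0, 1, 3, [3, 5, 6]),
  (0, 1, 3, [3, 5, 6]),
  (0, 0, 1, [1, 4, 2]),
  (0, 0, 1, [1, 4, 2]),
  (0, 0, 1, [1]),
  (0, 0, 1, [1]),
  (0, 1, 3, [3, 5, 6]),
  (0, 1, 3, [3, 5, 6]),
  (0, 0, 1, [1, 2, 4]),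
  (0, 0, 1, [1, 2, 4]),
  (0, 0, 1, [1, 6]),
  (0, 0, 1, [1, 6]),
  (1, 0, 1, [1, 3, 4, 12]),
  (1, 0, 1, [1, 7, 10, 15]),
  (0, 0, 1, [1, 7]),
  (0, 0, 1, [1, 7]),
  (0, 0, 1, [1, 2, 4]),
  (0, 0, 1, [1, 2, 4]),
  (0, 1, 3, [3, 5, 6]),
  (0, 1, 3, [3, 5, 6]),
  (0, 1, 3, [3, 5, 6]),
  (0, 1, 3, [3, 5, 6]),
  (0, 0, 1, [1, 7]),
  (0, 0, 1, [1, 7]),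
  (0, 1, 3, [3, 2, 0]),
  (1, 0, 1, [1, 4]),
  (0, 0, 1, [1, 4, 2]),
  (0, 0, 1, [1, 4, 2]),
  (0, 0, 1, [1]),
  (0, 0, 1, [1]),
  (0, 0, 1, [1, 5]),
  (0, 0, 1, [1, 5]),
  (0, 1, 3, [3]),
  (0, 1, 3, [3]),
  (0, 1, 3, [3]),
  (0, 1, 3, [3]),
  (0, 0, 1, [1]),
  (0, 0, 1, [1]),
  (0, 1, 3, [3]),
  (0, 1, 3, [3]),
  (0, 0, 1, [1, 2, 4]),
  (0, 0, 1, [1, 2, 4]),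
  (1, 1, 7, [7, 6, 13, 9]),
  (1, 1, 7, [7, 6, 13, 9]),
  (1, 0, 1, [1, 3, 6, 12, 9]),
  (1, 1, 7, [7, 6, 12, 9, 3]),
  (0, 0, 1, [1, 7]),
  (0, 0, 1, [1, 7]),
  (0, 1, 3, [3]),
  (0, 1, 3, [3]),
  (0, 1, 3, [3]),
  (0, 1, 3, [3]),
  (0, 1, 3, [3]),
  (0, 1, 3, [3]),
  (0, 1, 3, [3]),
  (0, 1, 3, [3]),
  (0, 1, 3, [3, 6, 5]),
  (0, 1, 3, [3, 6, 5]),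
  (0, 0, 1, [1, 4, 2]),
  (0, 0, 1, [1, 4, 2]),
  (0, 0, 1, [1]),
  (0, 0, 1, [1]),
  (0, 1, 3, [3, 6, 5]),
  (0, 1, 3, [3, 6, 5]),
  (2, 0, 3, [3]),
  (1, 0, 1, [1, 4]),
  (0, 0, 1, [1, 4, 2]),
  (0, 0, 1, [1, 4, 2]),
  (0, 0, 1, [1]),
  (0, 0, 1, [1]),
  (0, 0, 1, [1, 5, 7]),
  (0, 0, 1, [1, 5, 7]),
  (0, 0, 1, [1, 2, 4]),
  (0, 0, 1, [1, 2, 4]),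
  (0, 1, 3, [3, 6, 5]),
  (0, 1, 3, [3, 6, 5]),
  (0, 1, 3, [3, 6, 5]),
  (0, 1, 3, [3, 6, 5]),
  (0, 0, 1, [1, 7]),
  (0, 0, 1, [1, 7]),
  (0, 0, 1, [1, 2, 4]),
  (0, 0, 1, [1, 2, 4]),
  (0, 0, 1, [1, 6, 7]),
  (0, 0, 1, [1, 6, 7]),
  (0, 0, 1, [1, 3, 7]),
  (0, 0, 1, [1, 3, 7]),
  (0, 0, 1, [1, 7]),
  (0, 0, 1, [1, 7])]

def witL (w : ℕ) : ℕ := (witData.getD w (0, 0, 0, [])).1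
def witK (w : ℕ) : Fin 2 := if (witData.getD w (0, 0, 0, [])).2.1 = 0 then 0 else 1
def witX (w : ℕ) : ℕ := (witData.getD w (0, 0, 0, [])).2.2.1
def witS (w : ℕ) : List ℕ := (witData.getD w (0, 0, 0, [])).2.2.2

set_option maxRecDepth 100000 in
set_option maxHeartbeats 2000000 in
lemma witOK : ∀ w : Fin 256,
    checkW (ecaRule w.val) (witL w.val) (witK w.val) (witX w.val) (witS w.val) := by decide

/-- from a closed invariant family avoiding the constant, iterates avoid the constant -/
lemma iter_ne_const (h : Rule2) (L : ℕ) (k : Fin 2) (x0 : ℕ) (S : List ℕ)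
    (hw : checkW h L k x0 S) (t : ℕ) :
    (glob2 h)^[t] (dec L x0) ≠ fun _ => k := by
  obtain ⟨hx0, hS, _⟩ := hw
  suffices hmem : ∃ m ∈ S, (glob2 h)^[t] (dec L x0) = dec L m by
    obtain ⟨m, hm, he⟩ := hmem
    rw [he]; exact (hS m hm).2
  induction t with
  | zero => exact ⟨x0, hx0, rfl⟩
  | succ t ih =>
    obtain ⟨m, hm, he⟩ := ih
    obtain ⟨m', hm', he'⟩ := (hS m hm).1
    exact ⟨m', hm', by rw [Function.iterate_succ_apply', he, he']⟩

end Witness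

section Dynamics

variable {n : ℕ}

def sh (c : ZMod n) (y : ZMod n → Fin 2) : ZMod n → Fin 2 := fun i => y (i + c)

lemma glob3_emb (f : Rule3) (h : Rule2) (e : Fin 2 → Fin 3)
    (hag : ∀ a b c, f (e a) (e b) (e c) = e (h a b c)) (y : ZMod n → Fin 2) :
    glob3 f (fun i => e (y i)) = fun i => e (glob2 h y i) := by
  funext i; exact hag _ _ _

lemma glob3_emb_iter (f : Rule3) (h : Rule2) (e : Fin 2 → Fin 3)
    (hag : ∀ a b c, f (e a) (e b) (e c) = e (h a b c)) (y : ZMod n → Fin 2) (t : ℕ) :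
    (glob3 f)^[t] (fun i => e (y i)) = fun i => e ((glob2 h)^[t] y i) := by
  induction t with
  | zero => rfl
  | succ t ih =>
    rw [Function.iterate_succ_apply', ih, glob3_emb f h e hag, Function.iterate_succ_apply']

lemma glob2_sh (h : Rule2) (c : ZMod n) (y : ZMod n → Fin 2) :
    glob2 h (sh c y) = sh c (glob2 h y) := by
  funext i
  show h (y (i - 1 + c)) (y (i + c)) (y (i + 1 + c)) = h (y (i + c - 1)) (y (i + c)) (y (i + c + 1))
  rw [show i - 1 + c = i + c - 1 by ring, show i + 1 + c = i + c + 1 by ring]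

lemma glob2_iter_sh (h : Rule2) (c : ZMod n) (y : ZMod n → Fin 2) (t : ℕ) :
    (glob2 h)^[t] (sh c y) = sh c ((glob2 h)^[t] y) := by
  induction t with
  | zero => rfl
  | succ t ih =>
    rw [Function.iterate_succ_apply', ih, glob2_sh, Function.iterate_succ_apply']

lemma sh_sh (c c' : ZMod n) (y : ZMod n → Fin 2) : sh c (sh c' y) = sh (c + c') y := by
  funext i; show y (i + c + c') = y (i + (c + c')); rw [add_assoc]

lemma iter_sh_exists (hf : Rule2) (hsh : ∀ (z : ZMod n → Fin 2), ∃ c, glob2 hf z = sh c z)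
    (y : ZMod n → Fin 2) (t : ℕ) : ∃ c, (glob2 hf)^[t] y = sh c y := by
  induction t with
  | zero => exact ⟨0, by funext i; show y i = y (i + 0); rw [add_zero]⟩
  | succ t ih =>
    obtain ⟨c, ih⟩ := ih
    obtain ⟨c', h'⟩ := hsh (sh c y)
    exact ⟨c' + c, by rw [Function.iterate_succ_apply', ih, h', sh_sh]⟩

lemma sh170 : ∀ (n : ℕ) (z : ZMod n → Fin 2), ∃ c, glob2 (ecaRule 170) z = sh c z := by
  intro n z
  exact ⟨1, funext fun i => by
    show ecaRule 170 (z (i - 1)) (z i) (z (i + 1)) = z (i + 1)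
    rw [show ∀ a b c : Fin 2, ecaRule 170 a b c = c from by decide]⟩

lemma sh204 : ∀ (n : ℕ) (z : ZMod n → Fin 2), ∃ c, glob2 (ecaRule 204) z = sh c z := by
  intro n z
  exact ⟨0, funext fun i => by
    show ecaRule 204 (z (i - 1)) (z i) (z (i + 1)) = z (i + 0)
    rw [show ∀ a b c : Fin 2, ecaRule 204 a b c = b from by decide, add_zero]⟩

lemma sh240 : ∀ (n : ℕ) (z : ZMod n → Fin 2), ∃ c, glob2 (ecaRule 240) z = sh c z := by
  intro n z
  exact ⟨-1, funext fun i => by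
    show ecaRule 240 (z (i - 1)) (z i) (z (i + 1)) = z (i + -1)
    rw [show ∀ a b c : Fin 2, ecaRule 240 a b c = a from by decide, ← sub_eq_add_neg]⟩

lemma maj_transfer [NeZero n] (e : Fin 2 → Fin 3) (he : Function.Injective e)
    (y : ZMod n → Fin 2) (k : Fin 2)
    (hmaj : (Finset.univ.filter fun i => y i ≠ k).card <
      (Finset.univ.filter fun i => y i = k).card) :
    ∀ j : Fin 3, j ≠ e k →
      count3 (fun i => e (y i)) j < count3 (fun i => e (y i)) (e k) := by
  intro j hj
  have h1 : count3 (fun i => e (y i)) (e k) = (Finset.univ.filter fun i => y i = k).card := by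
    unfold count3
    congr 1
    apply Finset.filter_congr
    intro i _
    simp [he.eq_iff]
  have h2 : count3 (fun i => e (y i)) j ≤ (Finset.univ.filter fun i => y i ≠ k).card := by
    unfold count3
    apply Finset.card_le_card
    intro i hi
    simp only [Finset.mem_filter, Finset.mem_univ, true_and] at hi ⊢
    intro hik
    exact hj (by rw [← hi, hik])
  omega

end Dynamics

section MainPair

lemma main_pair (f g : Rule3) (hf hg : Rule2) (e : Fin 2 → Fin 3) (he : Function.Injective e)
    (hagf : ∀ a b c, f (e a) (e b) (e c) = e (hf a b c))
    (hagg : ∀ a b c, g (e a) (e b) (e c) = e (hg a b c))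
    (hsh : ∀ (n : ℕ) (z : ZMod n → Fin 2), ∃ c, glob2 hf z = sh c z)
    (hsol : solvesSimpleMajority f g) : False := by
  obtain ⟨m, nn, hs⟩ := hsol
  have hwlt : wolfram2 hg < 256 := wolfram_lt hg
  have hck := witOK ⟨wolfram2 hg, hwlt⟩
  rw [show ((⟨wolfram2 hg, hwlt⟩ : Fin 256) : ℕ) = wolfram2 hg from rfl, eca_wolfram hg] at hck
  set w := wolfram2 hg with hwdef
  set L := witL w
  set k := witK w
  set y := dec L (witX w) with hy
  have hmaj3 := maj_transfer e he y k hck.2.2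
  have heq := hs L (fun i => e (y i)) (e k) hmaj3
  obtain ⟨c, hc⟩ := iter_sh_exists hf (hsh _) y (nn L)
  rw [glob3_emb_iter f hf e hagf, hc, glob3_emb_iter g hg e hagg, glob2_iter_sh] at heq
  have hconst : (glob2 hg)^[m L] y = fun _ => k := by
    funext j
    have := congrFun heq (j - c)
    have := he this
    simpa [sh, sub_add_cancel] using this
  exact iter_ne_const hg L k (witX w) (witS w) hck (m L) hconst

end MainPair

section Assemble

lemma shift_of_w (hf : Rule2)
    (h : wolfram2 hf = 170 ∨ wolfram2 hf = 204 ∨ wolfram2 hf = 240) :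
    ∀ (n : ℕ) (z : ZMod n → Fin 2), ∃ c, glob2 hf z = sh c z := by
  rcases h with h | h | h <;> rw [← eca_wolfram hf, h]
  exacts [sh170, sh204, sh240]

lemma partA : ¬ ∃ f g : Rule3, allConserving3 f ∧ reducible3 g ∧ solvesSimpleMajority f g := by
  rintro ⟨f, g, hac, hred, hsol⟩
  obtain ⟨⟨h1, hag1, hm1⟩, ⟨h2, hag2, hm2⟩, ⟨h3, hag3, hm3⟩⟩ := partB f hac
  simp only [Set.mem_insert_iff, Set.mem_singleton_iff] at hm1 hm2 hm3
  have inj01 : Function.Injective i01 := by decide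
  have inj02 : Function.Injective i02 := by decide
  have inj12 : Function.Injective i12 := by decide
  have d1 : (∀ (n : ℕ) (z : ZMod n → Fin 2), ∃ c, glob2 h1 z = sh c z) ∨
      (wolfram2 h1 = 184 ∨ wolfram2 h1 = 226) := by
    rcases hm1 with h | h | h | h | h
    exacts [Or.inl (shift_of_w _ (Or.inl h)), Or.inr (Or.inl h),
      Or.inl (shift_of_w _ (Or.inr (Or.inl h))), Or.inr (Or.inr h),
      Or.inl (shift_of_w _ (Or.inr (Or.inr h)))]
  have d2 : (∀ (n : ℕ) (z : ZMod n → Fin 2), ∃ c, glob2 h2 z = sh c z) ∨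
      (wolfram2 h2 = 184 ∨ wolfram2 h2 = 226) := by
    rcases hm2 with h | h | h | h | h
    exacts [Or.inl (shift_of_w _ (Or.inl h)), Or.inr (Or.inl h),
      Or.inl (shift_of_w _ (Or.inr (Or.inl h))), Or.inr (Or.inr h),
      Or.inl (shift_of_w _ (Or.inr (Or.inr h)))]
  have d3 : (∀ (n : ℕ) (z : ZMod n → Fin 2), ∃ c, glob2 h3 z = sh c z) ∨
      (wolfram2 h3 = 184 ∨ wolfram2 h3 = 226) := by
    rcases hm3 with h | h | h | h | h
    exacts [Or.inl (shift_of_w _ (Or.inl h)), Or.inr (Or.inl h),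
      Or.inl (shift_of_w _ (Or.inr (Or.inl h))), Or.inr (Or.inr h),
      Or.inl (shift_of_w _ (Or.inr (Or.inr h)))]
  rcases d1 with hs1 | hr1
  · obtain ⟨hg1, hagg1⟩ := hred.1
    exact main_pair f g h1 hg1 i01 inj01 hag1 hagg1 hs1 hsol
  rcases d2 with hs2 | hr2
  · obtain ⟨hg2, hagg2⟩ := hred.2.1
    exact main_pair f g h2 hg2 i02 inj02 hag2 hagg2 hs2 hsol
  rcases d3 with hs3 | hr3
  · obtain ⟨hg3, hagg3⟩ := hred.2.2
    exact main_pair f g h3 hg3 i12 inj12 hag3 hagg3 hs3 hsol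
  exact partC ⟨f, hac, ⟨h1, hag1, hr1⟩, ⟨h2, hag2, hr2⟩, ⟨h3, hag3, hr3⟩⟩

end Assemble

theorem no_simple_majority_solution :
    (¬ ∃ f g : Rule3, allConserving3 f ∧ reducible3 g ∧ solvesSimpleMajority f g) ∧
    (∀ f : Rule3, allConserving3 f →
      (∃ h, agrees01 f h ∧ wolfram2 h ∈ ({170, 184, 204, 226, 240} : Set ℕ)) ∧
      (∃ h, agrees02 f h ∧ wolfram2 h ∈ ({170, 184, 204, 226, 240} : Set ℕ)) ∧
      (∃ h, agrees12 f h ∧ wolfram2 h ∈ ({170, 184, 204, 226, 240} : Set ℕ))) ∧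
    (¬ ∃ f : Rule3, allConserving3 f ∧
      (∃ h, agrees01 f h ∧ (wolfram2 h = 184 ∨ wolfram2 h = 226)) ∧
      (∃ h, agrees02 f h ∧ (wolfram2 h = 184 ∨ wolfram2 h = 226)) ∧
      (∃ h, agrees12 f h ∧ (wolfram2 h = 184 ∨ wolfram2 h = 226))) := by
  exact ⟨partA, partB, partC⟩
end
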